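/- Let 𝒫 be a set of primes such that ∑_{p∈𝒫} p⁻¹ ≤ 1 + (1 − ∑_{p∈𝒫} p⁻²)^{1/2}. Suppose 𝒫 is nonempty. Then the chain of strict inequalities ∑_{p∈𝒫} 1/(p log p) > ∑_{n∈ℕ₂(𝒫)} 1/(n log n) > ∑_{n∈ℕ₃(𝒫)} 1/(n log n) > ⋯ holds; that is, for every natural number k ≥ 1, ∑_{n∈ℕ_k(𝒫)} 1/(n log n) > ∑_{n∈ℕ_{k+1}(𝒫)} 1/(n log n). -/

import Mathlib

/-- A nonempty set of natural numbers is *primitive* if no element of the set divides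
another element of the set; the singleton set `{1}` is not considered primitive. -/
def Primitive (S : Set ℕ) : Prop :=
  S.Nonempty ∧ S ≠ {1} ∧ ∀ a ∈ S, ∀ b ∈ S, a ∣ b → a = b

/-- `NSet P` is the set `ℕ(P)` of natural numbers all of whose prime factors lie in `P`
(the multiplicative semigroup generated by `P`, which contains `1`). -/
def NSet (P : Set ℕ) : Set ℕ :=
  {n : ℕ | 0 < n ∧ ∀ p : ℕ, p.Prime → p ∣ n → p ∈ P}

/-- `NkSet P k = ℕ_k(P)`: the elements of `ℕ(P)` with exactly `k` prime factors
counted with multiplicity. -/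
def NkSet (P : Set ℕ) (k : ℕ) : Set ℕ :=
  {n ∈ NSet P | n.primeFactorsList.length = k}

/-- `NgeSet P k = ℕ_{≥k}(P)`: the elements of `ℕ(P)` with at least `k` prime factors
counted with multiplicity. -/
def NgeSet (P : Set ℕ) (k : ℕ) : Set ℕ :=
  {n ∈ NSet P | k ≤ n.primeFactorsList.length}

open scoped ENNReal Classical
open MeasureTheory Set

namespace BM

abbrev Om (n : ℕ) : ℕ := n.primeFactorsList.length

lemma om_mul {a b : ℕ} (ha : a ≠ 0) (hb : b ≠ 0) : Om (a * b) = Om a + Om b := by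
  simpa using (Nat.perm_primeFactorsList_mul ha hb).length_eq

lemma om_eq_one_iff {n : ℕ} : Om n = 1 ↔ n.Prime := by
  have := @ArithmeticFunction.cardFactors_eq_one_iff_prime n
  rwa [ArithmeticFunction.cardFactors_apply] at this

lemma mem_NSet_of_dvd {P : Set ℕ} {n d : ℕ} (hn : n ∈ NSet P) (hd : d ∣ n) : d ∈ NSet P := by
  obtain ⟨hn0, hn1⟩ := hn
  refine ⟨Nat.pos_of_ne_zero fun h => ?_, fun p hp hpd => hn1 p hp (hpd.trans hd)⟩
  subst h
  exact hn0.ne' (Nat.eq_zero_of_zero_dvd hd)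

lemma NSet_mul {P : Set ℕ} {a b : ℕ} (ha : a ∈ NSet P) (hb : b ∈ NSet P) :
    a * b ∈ NSet P := by
  refine ⟨Nat.mul_pos ha.1 hb.1, fun p hp hpd => ?_⟩
  rcases (Nat.Prime.dvd_mul hp).mp hpd with h | h
  · exact ha.2 p hp h
  · exact hb.2 p hp h

lemma NkSet_one (P : Set ℕ) (hP : ∀ p ∈ P, Nat.Prime p) : NkSet P 1 = P := by
  ext n
  constructor
  · rintro ⟨hn, hlen⟩
    have hp : n.Prime := om_eq_one_iff.mp hlen
    exact hn.2 n hp dvd_rfl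
  · intro hn
    have hp := hP n hn
    refine ⟨⟨hp.pos, fun q hq hqd => ?_⟩, om_eq_one_iff.mpr hp⟩
    have := (Nat.prime_dvd_prime_iff_eq hq hp).mp hqd
    subst this; exact hn

lemma two_le_of_mem {P : Set ℕ} {k n : ℕ} (hk : 1 ≤ k) (hn : n ∈ NkSet P k) : 2 ≤ n := by
  rcases hn with ⟨⟨h0, _⟩, hlen⟩
  by_contra h
  interval_cases n
  · exact absurd hlen (by simp [Nat.primeFactorsList_one]; omega)

lemma pow_mem_NkSet {P : Set ℕ} (hP : ∀ p ∈ P, Nat.Prime p) {p : ℕ} (hp : p ∈ P) (j : ℕ) :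
    p ^ j ∈ NkSet P j := by
  have hpp := hP p hp
  refine ⟨⟨pow_pos hpp.pos j, fun q hq hqd => ?_⟩, ?_⟩
  · have := (Nat.prime_dvd_prime_iff_eq hq hpp).mp (hq.dvd_of_dvd_pow hqd)
    subst this; exact hp
  · rw [hpp.primeFactorsList_pow]; simp

lemma exists_dvd_om {n : ℕ} (hn : n ≠ 0) {j : ℕ} (hj : j ≤ Om n) :
    ∃ e, e ∣ n ∧ Om e = j := by
  refine ⟨(n.primeFactorsList.take j).prod, ?_, ?_⟩
  · calc (n.primeFactorsList.take j).prod ∣ n.primeFactorsList.prod :=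
        (n.primeFactorsList.take_sublist j).prod_dvd_prod
    _ = n := Nat.prod_primeFactorsList hn
  · have h1 : ∀ q ∈ n.primeFactorsList.take j, Nat.Prime q := fun q hq =>
      Nat.prime_of_mem_primeFactorsList (List.mem_of_mem_take hq)
    have hperm := Nat.primeFactorsList_unique (n := (n.primeFactorsList.take j).prod) rfl h1
    have hj' : j ≤ n.primeFactorsList.length := hj
    rw [Om, ← hperm.length_eq, List.length_take]
    omega

lemma card_om_one_le_card_om_two {n : ℕ} (hn : n ≠ 0) (h3 : 3 ≤ Om n) :
    (n.divisors.filter fun e => Om e = 1).card ≤ (n.divisors.filter fun e => Om e = 2).card := by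
  have hn1 : n ≠ 1 := by rintro rfl; simp [Om, Nat.primeFactorsList_one] at h3
  set q := n.minFac with hqdef
  have hq : q.Prime := Nat.minFac_prime hn1
  have hqd : q ∣ n := Nat.minFac_dvd n
  -- find e₀
  obtain ⟨e₀, he₀n, he₀2, hkey⟩ :
      ∃ e₀, e₀ ∣ n ∧ Om e₀ = 2 ∧ ∀ p : ℕ, p.Prime → p ≠ q → e₀ ≠ q * p := by
    by_cases hqq : q * q ∣ n
    · refine ⟨q * q, hqq, ?_, ?_⟩
      · rw [om_mul hq.ne_zero hq.ne_zero, om_eq_one_iff.mpr hq]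
      · intro p hp hpq h
        exact hpq ((Nat.eq_of_mul_eq_mul_left hq.pos h).symm)
    · obtain ⟨m, hm⟩ := hqd
      have hm0 : m ≠ 0 := by rintro rfl; simp at hm; exact hn hm
      have hqm : ¬ q ∣ m := fun h => hqq (by obtain ⟨t, rfl⟩ := h; exact ⟨t, by rw [hm]; ring⟩)
      have hOmm : 2 ≤ Om m := by
        have := om_mul (a := q) (b := m) hq.ne_zero hm0
        rw [← hm] at this
        have h1 : Om q = 1 := om_eq_one_iff.mpr hq
        omega
      obtain ⟨e, hem, he2⟩ := exists_dvd_om hm0 hOmm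
      refine ⟨e, hem.trans ⟨q, by rw [hm]; ring⟩, he2, ?_⟩
      rintro p hp hpq rfl
      exact hqm (dvd_trans (Dvd.intro p rfl) hem)
  -- injection
  apply Finset.card_le_card_of_injOn (fun p => if p = q then e₀ else q * p)
  · intro p hp
    simp only [Finset.mem_coe, Finset.mem_filter, Nat.mem_divisors] at hp ⊢
    obtain ⟨⟨hpn, _⟩, hp1⟩ := hp
    have hpp : p.Prime := om_eq_one_iff.mp hp1
    by_cases h : p = q
    · simp only [h, if_pos rfl]
      exact ⟨⟨he₀n, hn⟩, he₀2⟩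
    · simp only [if_neg h]
      refine ⟨⟨?_, hn⟩, ?_⟩
      · exact (Nat.Coprime.mul_dvd_of_dvd_of_dvd
          ((Nat.coprime_primes hq hpp).mpr (fun hh => h hh.symm)) hqd hpn)
      · rw [om_mul hq.ne_zero hpp.ne_zero, om_eq_one_iff.mpr hq, om_eq_one_iff.mpr hpp]
  · intro p₁ h₁ p₂ h₂ heq
    simp only [Finset.mem_coe, Finset.mem_filter, Nat.mem_divisors] at h₁ h₂
    have hp₁ : p₁.Prime := om_eq_one_iff.mp h₁.2
    have hp₂ : p₂.Prime := om_eq_one_iff.mp h₂.2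
    by_cases e₁ : p₁ = q <;> by_cases e₂ : p₂ = q <;>
      simp only [e₁, e₂, if_pos, if_neg, if_true, reduceIte] at heq
    · rw [e₁, e₂]
    · exact absurd heq (hkey p₂ hp₂ e₂)
    · exact absurd heq.symm (hkey p₁ hp₁ e₁)
    · exact Nat.eq_of_mul_eq_mul_left hq.pos heq

noncomputable def gg (P : Set ℕ) (k : ℕ) : ℕ → ℝ≥0∞ := (NkSet P k).indicator 1

lemma gg_eq_one {P : Set ℕ} {k n : ℕ} (h : n ∈ NkSet P k) : gg P k n = 1 :=
  Set.indicator_of_mem h 1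

lemma gg_eq_zero {P : Set ℕ} {k n : ℕ} (h : n ∉ NkSet P k) : gg P k n = 0 :=
  Set.indicator_of_notMem h 1

lemma count_eq {P : Set ℕ} {a b n : ℕ} (hn : n ∈ NSet P) (hab : Om n = a + b) :
    ∑ p ∈ n.divisorsAntidiagonal, gg P a p.1 * gg P b p.2 =
      ((n.divisors.filter fun e => Om e = b).card : ℝ≥0∞) := by
  have hn0 : n ≠ 0 := hn.1.ne'
  have step1 : ∀ p ∈ n.divisorsAntidiagonal,
      gg P a p.1 * gg P b p.2 = if Om p.2 = b then 1 else 0 := by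
    rintro ⟨d, e⟩ hp
    rw [Nat.mem_divisorsAntidiagonal] at hp
    obtain ⟨hde, -⟩ := hp
    have hd0 : d ≠ 0 := by rintro rfl; simp at hde; exact hn0 hde.symm
    have he0 : e ≠ 0 := by rintro rfl; simp at hde; exact hn0 hde.symm
    have hdN : d ∈ NSet P := mem_NSet_of_dvd hn (Dvd.intro e hde)
    have heN : e ∈ NSet P := mem_NSet_of_dvd hn (Dvd.intro_left d hde)
    by_cases hb : Om e = b
    · have hda : Om d = a := by
        have := om_mul hd0 he0; rw [hde, hab] at this; omega
      simp only [if_pos hb]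
      rw [gg_eq_one ⟨hdN, hda⟩, gg_eq_one ⟨heN, hb⟩, mul_one]
    · simp only [if_neg hb]
      rw [gg_eq_zero (fun h => hb h.2), mul_zero]
  rw [Finset.sum_congr rfl step1, Finset.sum_boole]
  congr 1
  apply Finset.card_bij (fun p _ => p.2)
  · rintro ⟨d, e⟩ hp
    simp only [Finset.mem_filter, Nat.mem_divisorsAntidiagonal] at hp ⊢
    exact ⟨Nat.mem_divisors.mpr ⟨Dvd.intro_left d hp.1.1, hn0⟩, hp.2⟩
  · rintro ⟨d₁, e₁⟩ h₁ ⟨d₂, e₂⟩ h₂ heq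
    simp only [Finset.mem_filter, Nat.mem_divisorsAntidiagonal] at h₁ h₂
    simp only at heq
    subst heq
    have he0 : e₁ ≠ 0 := by rintro rfl; simp at h₁; exact hn0 h₁.1.1.symm
    have : d₁ = d₂ := by
      have := h₁.1.1.trans h₂.1.1.symm
      exact Nat.eq_of_mul_eq_mul_right (Nat.pos_of_ne_zero he0) this
    simp [this]
  · intro e he
    simp only [Finset.mem_filter, Nat.mem_divisors] at he
    obtain ⟨⟨hed, -⟩, he2⟩ := he
    refine ⟨(n / e, e), ?_, rfl⟩
    simp only [Finset.mem_filter, Nat.mem_divisorsAntidiagonal]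
    exact ⟨⟨Nat.div_mul_cancel hed, hn0⟩, he2⟩

lemma convA {P : Set ℕ} {k : ℕ} (hk : 1 ≤ k) (n : ℕ) :
    ∑ p ∈ n.divisorsAntidiagonal, gg P (k+1) p.1 * gg P 1 p.2 ≤
      ∑ p ∈ n.divisorsAntidiagonal, gg P k p.1 * gg P 2 p.2 := by
  by_cases hn : n ∈ NSet P ∧ Om n = k + 2
  · rw [count_eq hn.1 (by omega : Om n = (k+1) + 1), count_eq hn.1 (by omega : Om n = k + 2)]
    exact_mod_cast Nat.cast_le.mpr
      (card_om_one_le_card_om_two hn.1.1.ne' (by omega))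
  · have : ∀ p ∈ n.divisorsAntidiagonal, gg P (k+1) p.1 * gg P 1 p.2 = 0 := by
      rintro ⟨d, e⟩ hp
      rw [Nat.mem_divisorsAntidiagonal] at hp
      obtain ⟨hde, hn0⟩ := hp
      by_cases hd : d ∈ NkSet P (k+1)
      · by_cases he : e ∈ NkSet P 1
        · exfalso
          apply hn
          constructor
          · rw [← hde]; exact NSet_mul hd.1 he.1
          · rw [← hde, om_mul hd.1.1.ne' he.1.1.ne']
            show d.primeFactorsList.length + e.primeFactorsList.length = k + 2
            rw [hd.2, he.2]
        · rw [gg_eq_zero he, mul_zero]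
      · rw [gg_eq_zero hd, zero_mul]
    rw [Finset.sum_eq_zero this]
    exact zero_le

noncomputable def w (s : ℝ) (n : ℕ) : ℝ≥0∞ := ENNReal.ofReal ((n : ℝ) ^ (-s))

lemma w_mul (s : ℝ) (d e : ℕ) (hd : d ≠ 0) (he : e ≠ 0) :
    w s (d * e) = w s d * w s e := by
  unfold w
  rw [← ENNReal.ofReal_mul (Real.rpow_nonneg (Nat.cast_nonneg d) _)]
  congr 1
  push_cast
  exact Real.mul_rpow (Nat.cast_nonneg d) (Nat.cast_nonneg e)

lemma gg_zero (P : Set ℕ) (k : ℕ) : gg P k 0 = 0 :=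
  gg_eq_zero (fun h => absurd h.1.1 (lt_irrefl 0))

lemma tsum_dirichlet (a b : ℕ → ℝ≥0∞) (ha : a 0 = 0) (hb : b 0 = 0) (s : ℝ) :
    (∑' d, a d * w s d) * (∑' e, b e * w s e) =
      ∑' n, (∑ p ∈ n.divisorsAntidiagonal, a p.1 * b p.2) * w s n := by
  set F : ℕ × ℕ → ℝ≥0∞ := fun p => a p.1 * b p.2 * w s (p.1 * p.2) with hF
  have lhs : (∑' d, a d * w s d) * (∑' e, b e * w s e) = ∑' p : ℕ × ℕ, F p := by
    rw [← ENNReal.tsum_mul_right]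
    rw [ENNReal.tsum_prod']
    congr 1; ext d
    rw [← ENNReal.tsum_mul_left]
    congr 1; ext e
    by_cases hd : d = 0
    · simp [hF, hd, ha]
    by_cases he : e = 0
    · simp [hF, he, hb]
    rw [hF]
    simp only []
    rw [w_mul s d e hd he]
    ring
  rw [lhs]
  -- reindex over sigma type
  set ι : (Σ n : ℕ, {p : ℕ × ℕ // p ∈ n.divisorsAntidiagonal}) → ℕ × ℕ := fun x => x.2.1 with hι
  have hinj : Function.Injective ι := by
    rintro ⟨n₁, p₁, hp₁⟩ ⟨n₂, p₂, hp₂⟩ h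
    simp only [hι] at h
    rw [Nat.mem_divisorsAntidiagonal] at hp₁ hp₂
    have hn : n₁ = n₂ := by rw [← hp₁.1, ← hp₂.1, h]
    subst hn; subst h; rfl
  have hsupp : Function.support F ⊆ Set.range ι := by
    intro p hp
    have h1 : p.1 ≠ 0 := by rintro h; apply hp; simp [hF, h, ha]
    have h2 : p.2 ≠ 0 := by rintro h; apply hp; simp [hF, h, hb]
    exact ⟨⟨p.1 * p.2, ⟨p, Nat.mem_divisorsAntidiagonal.mpr ⟨rfl, mul_ne_zero h1 h2⟩⟩⟩, rfl⟩
  rw [← hinj.tsum_eq hsupp]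
  rw [ENNReal.tsum_sigma']
  congr 1; ext n
  rw [show (fun c : {p : ℕ × ℕ // p ∈ n.divisorsAntidiagonal} => F (ι ⟨n, c⟩)) =
    (fun c : {p : ℕ × ℕ // p ∈ n.divisorsAntidiagonal} => F c.1) from rfl]
  rw [Finset.tsum_subtype n.divisorsAntidiagonal F]
  rw [Finset.sum_mul]
  apply Finset.sum_congr rfl
  intro p hp
  rw [Nat.mem_divisorsAntidiagonal] at hp
  rw [hF]
  simp only []
  rw [hp.1]

noncomputable def SS (P : Set ℕ) (k : ℕ) (s : ℝ) : ℝ≥0∞ := ∑' n, gg P k n * w s n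

lemma SS_mul_SS (P : Set ℕ) (j l : ℕ) (s : ℝ) :
    SS P j s * SS P l s = ∑' n, (∑ p ∈ n.divisorsAntidiagonal, gg P j p.1 * gg P l p.2) * w s n :=
  tsum_dirichlet _ _ (gg_zero P j) (gg_zero P l) s

lemma stepA {P : Set ℕ} {k : ℕ} (hk : 1 ≤ k) (s : ℝ) :
    SS P (k+1) s * SS P 1 s ≤ SS P k s * SS P 2 s := by
  rw [SS_mul_SS, SS_mul_SS]
  exact ENNReal.tsum_le_tsum fun n => mul_le_mul_left (convA hk n) _

/-- squares of elements of P -/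

def SqP (P : Set ℕ) : Set ℕ := (fun p => p ^ 2) '' P

lemma SS_one_two_mul {P : Set ℕ} (hP : ∀ p ∈ P, Nat.Prime p) (s : ℝ) :
    SS P 1 (2 * s) = ∑' n, (SqP P).indicator 1 n * w s n := by
  have hinj : Function.Injective (fun p : ℕ => p ^ 2) :=
    fun a b h => Nat.pow_left_injective (by norm_num) h
  have hsupp : Function.support (fun n => (SqP P).indicator (1 : ℕ → ℝ≥0∞) n * w s n) ⊆
      Set.range (fun p : ℕ => p ^ 2) := by
    intro n hn
    have : n ∈ SqP P := by
      by_contra h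
      apply hn
      simp [Set.indicator_of_notMem h]
    obtain ⟨p, -, hp⟩ := this
    exact ⟨p, hp⟩
  rw [← hinj.tsum_eq hsupp]
  unfold SS
  congr 1; ext p
  have h1 : gg P 1 p = (SqP P).indicator 1 (p ^ 2) := by
    by_cases hp : p ∈ P
    · rw [gg_eq_one (by rw [NkSet_one P hP]; exact hp),
        Set.indicator_of_mem (show p ^ 2 ∈ SqP P from ⟨p, hp, rfl⟩)]
      rfl
    · rw [gg_eq_zero (by rw [NkSet_one P hP]; exact hp), Set.indicator_of_notMem]
      rintro ⟨q, hq, hqp⟩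
      exact hp (by rwa [hinj hqp] at hq)
  rw [h1]
  congr 1
  unfold w
  congr 1
  push_cast
  rw [← Real.rpow_natCast (p : ℝ) 2, ← Real.rpow_mul (Nat.cast_nonneg p)]
  norm_num

lemma stepB {P : Set ℕ} (hP : ∀ p ∈ P, Nat.Prime p) (s : ℝ) :
    2 * SS P 2 s ≤ SS P 1 s * SS P 1 s + SS P 1 (2 * s) := by
  rw [SS_mul_SS, SS_one_two_mul hP, ← ENNReal.tsum_add]
  unfold SS
  rw [← ENNReal.tsum_mul_left]
  apply ENNReal.tsum_le_tsum
  intro n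
  by_cases hn : n ∈ NkSet P 2
  swap
  · rw [gg_eq_zero hn]; simp
  have hn0 : n ≠ 0 := hn.1.1.ne'
  -- n = p * q with p q primes in P
  obtain ⟨p, q, hl⟩ := List.length_eq_two.mp hn.2
  have hprodl := Nat.prod_primeFactorsList hn0
  rw [hl] at hprodl
  simp only [List.prod_cons, List.prod_nil, mul_one] at hprodl
  have hpmem : p ∈ n.primeFactorsList := by rw [hl]; simp
  have hqmem : q ∈ n.primeFactorsList := by rw [hl]; simp
  have hpp : p.Prime := Nat.prime_of_mem_primeFactorsList hpmem
  have hqp : q.Prime := Nat.prime_of_mem_primeFactorsList hqmem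
  have hpP : p ∈ P := hn.1.2 p hpp (Nat.dvd_of_mem_primeFactorsList hpmem)
  have hqP : q ∈ P := hn.1.2 q hqp (Nat.dvd_of_mem_primeFactorsList hqmem)
  have hgp : gg P 1 p = 1 := gg_eq_one (by rw [NkSet_one P hP]; exact hpP)
  have hgq : gg P 1 q = 1 := gg_eq_one (by rw [NkSet_one P hP]; exact hqP)
  rw [gg_eq_one hn]
  rw [one_mul, two_mul]
  by_cases hpq : p = q
  · -- n = p^2
    subst hpq
    have hsq : (SqP P).indicator (1 : ℕ → ℝ≥0∞) n = 1 := by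
      rw [Set.indicator_of_mem (show n ∈ SqP P from ⟨p, hpP, by rw [← hprodl]; ring⟩)]; rfl
    have hAD : ((p, p) : ℕ × ℕ) ∈ n.divisorsAntidiagonal :=
      Nat.mem_divisorsAntidiagonal.mpr ⟨hprodl, hn0⟩
    have h1 : (1 : ℝ≥0∞) ≤ ∑ x ∈ n.divisorsAntidiagonal, gg P 1 x.1 * gg P 1 x.2 := by
      have := Finset.single_le_sum (f := fun x : ℕ × ℕ => gg P 1 x.1 * gg P 1 x.2)
        (fun i _ => zero_le) hAD
      simpa [hgp] using this
    apply add_le_add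
    · have := mul_le_mul_left h1 (w s n)
      rwa [one_mul] at this
    · rw [hsq, one_mul]
  · -- two distinct pairs
    have hAD1 : ((p, q) : ℕ × ℕ) ∈ n.divisorsAntidiagonal :=
      Nat.mem_divisorsAntidiagonal.mpr ⟨hprodl, hn0⟩
    have hAD2 : ((q, p) : ℕ × ℕ) ∈ n.divisorsAntidiagonal :=
      Nat.mem_divisorsAntidiagonal.mpr ⟨by rw [← hprodl]; ring, hn0⟩
    have hsub : ({(p, q), (q, p)} : Finset (ℕ × ℕ)) ⊆ n.divisorsAntidiagonal := by
      intro x hx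
      rcases Finset.mem_insert.mp hx with h | h
      · subst h; exact hAD1
      · rw [Finset.mem_singleton] at h; subst h; exact hAD2
    have hne : ((p, q) : ℕ × ℕ) ≠ (q, p) := by
      intro h; exact hpq (congrArg Prod.fst h)
    have h2 : (2 : ℝ≥0∞) ≤ ∑ x ∈ n.divisorsAntidiagonal, gg P 1 x.1 * gg P 1 x.2 := by
      have := Finset.sum_le_sum_of_subset (f := fun x : ℕ × ℕ => gg P 1 x.1 * gg P 1 x.2) hsub
      rw [Finset.sum_pair hne] at this
      simpa [hgp, hgq, one_add_one_eq_two] using this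
    calc w s n + w s n = 2 * w s n := by rw [two_mul]
    _ ≤ (∑ x ∈ n.divisorsAntidiagonal, gg P 1 x.1 * gg P 1 x.2) * w s n := mul_le_mul_left h2 _
    _ ≤ _ := le_add_right le_rfl

lemma SS_le_mul {P : Set ℕ} (j : ℕ) (s : ℝ) :
    SS P (j+1) s ≤ SS P j s * SS P 1 s := by
  rw [SS_mul_SS]
  unfold SS
  apply ENNReal.tsum_le_tsum
  intro n
  by_cases hn : n ∈ NkSet P (j+1)
  swap
  · rw [gg_eq_zero hn]; simp
  rw [gg_eq_one hn]
  apply mul_le_mul_left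
  rw [count_eq hn.1 (by exact hn.2 : Om n = j + 1)]
  have h2n : 2 ≤ n := two_le_of_mem (by omega) hn
  have : n.minFac ∈ n.divisors.filter fun e => Om e = 1 := by
    rw [Finset.mem_filter, Nat.mem_divisors]
    exact ⟨⟨Nat.minFac_dvd n, by omega⟩, om_eq_one_iff.mpr (Nat.minFac_prime (by omega))⟩
  have hcard : 1 ≤ (n.divisors.filter fun e => Om e = 1).card :=
    Finset.card_pos.mpr ⟨_, this⟩
  exact_mod_cast Nat.one_le_cast.mpr hcard

lemma SS_pos {P : Set ℕ} (hP : ∀ p ∈ P, Nat.Prime p) (hne : P.Nonempty) (j : ℕ) (s : ℝ) :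
    0 < SS P j s := by
  obtain ⟨p, hp⟩ := hne
  have hmem := pow_mem_NkSet hP hp j
  have hppos : (0 : ℝ) < ((p ^ j : ℕ) : ℝ) := by
    have := (hP p hp).pos
    positivity
  have hterm : 0 < gg P j (p ^ j) * w s (p ^ j) := by
    rw [gg_eq_one hmem, one_mul]
    unfold w
    exact ENNReal.ofReal_pos.mpr (Real.rpow_pos_of_pos hppos _)
  exact hterm.trans_le (ENNReal.le_tsum _)

section analytic
variable {P : Set ℕ} (hP : ∀ p ∈ P, Nat.Prime p)
include hP

lemma two_le_p {p : ℕ} (hp : p ∈ P) : (2 : ℝ) ≤ (p : ℝ) := by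
  exact_mod_cast (hP p hp).two_le

lemma summable_rpow (hsummable : Summable fun p : P => (1 : ℝ) / (p : ℝ))
    {s : ℝ} (hs : 1 ≤ s) : Summable fun p : P => (p : ℝ) ^ (-s) := by
  apply Summable.of_nonneg_of_le (fun p => Real.rpow_nonneg (Nat.cast_nonneg _) _)
    (fun p => ?_) hsummable
  have h1p : (1 : ℝ) ≤ (p : ℕ) := by have := two_le_p hP p.2; norm_num at this ⊢; linarith
  calc ((p : ℕ) : ℝ) ^ (-s) ≤ ((p : ℕ) : ℝ) ^ (-1 : ℝ) :=
      Real.rpow_le_rpow_of_exponent_le h1p (by linarith)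
  _ = 1 / ((p : ℕ) : ℝ) := by rw [Real.rpow_neg_one, one_div]

lemma SS_one_eq {s : ℝ} (hsum : Summable fun p : P => (p : ℝ) ^ (-s)) :
    SS P 1 s = ENNReal.ofReal (∑' p : P, (p : ℝ) ^ (-s)) := by
  rw [ENNReal.ofReal_tsum_of_nonneg (fun p => Real.rpow_nonneg (Nat.cast_nonneg _) _) hsum]
  unfold SS
  rw [show (fun p : P => ENNReal.ofReal ((p : ℝ) ^ (-s))) = fun p : P => w s p from rfl]
  rw [tsum_subtype P (fun n => w s n)]
  congr 1; ext n
  by_cases hn : n ∈ P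
  · rw [gg_eq_one (by rw [NkSet_one P hP]; exact hn), Set.indicator_of_mem hn, one_mul]
  · rw [gg_eq_zero (by rw [NkSet_one P hP]; exact hn), Set.indicator_of_notMem hn, zero_mul]

lemma stepC (hne : P.Nonempty)
    (hsummable : Summable fun p : P => (1 : ℝ) / (p : ℝ))
    (hineq : ∑' p : P, (1 : ℝ) / (p : ℝ) ≤
      1 + Real.sqrt (1 - ∑' p : P, (1 : ℝ) / ((p : ℝ) ^ 2)))
    {s : ℝ} (hs : 1 < s) :
    SS P 1 s * SS P 1 s + SS P 1 (2 * s) < 2 * SS P 1 s := by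
  obtain ⟨p₀, hp₀⟩ := hne
  have hp₀2 : (2 : ℝ) ≤ (p₀ : ℝ) := two_le_p hP hp₀
  set A1 : ℝ := ∑' p : P, (1 : ℝ) / (p : ℝ) with hA1
  set A2 : ℝ := ∑' p : P, (1 : ℝ) / ((p : ℝ) ^ 2) with hA2
  have hsum_s : Summable fun p : P => (p : ℝ) ^ (-s) := summable_rpow hP hsummable hs.le
  have hsum_2s : Summable fun p : P => (p : ℝ) ^ (-(2 * s)) :=
    summable_rpow hP hsummable (by linarith)
  have hsum_2 : Summable fun p : P => (1 : ℝ) / ((p : ℝ) ^ 2) := by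
    apply Summable.of_nonneg_of_le (fun p => by positivity) (fun p => ?_) hsummable
    have := two_le_p hP p.2
    rw [div_le_div_iff₀ (by positivity) (by positivity)]
    nlinarith
  set x : ℝ := ∑' p : P, (p : ℝ) ^ (-s) with hx
  set y : ℝ := ∑' p : P, (p : ℝ) ^ (-(2 * s)) with hy
  have bound1 : ∀ p : P, ((p : ℕ) : ℝ) ^ (-s) ≤ 1 / ((p : ℕ) : ℝ) := by
    intro p
    have h1p : (1 : ℝ) ≤ ((p : ℕ) : ℝ) := by have := two_le_p hP p.2; linarith
    calc ((p : ℕ) : ℝ) ^ (-s) ≤ ((p : ℕ) : ℝ) ^ (-1 : ℝ) :=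
        Real.rpow_le_rpow_of_exponent_le h1p (by linarith)
    _ = 1 / ((p : ℕ) : ℝ) := by rw [Real.rpow_neg_one, one_div]
  have hx_pos : 0 < x := by
    apply Summable.tsum_pos hsum_s (fun p => Real.rpow_nonneg (Nat.cast_nonneg _) _) ⟨p₀, hp₀⟩
    exact Real.rpow_pos_of_pos (by linarith) _
  have hxlt : x < A1 := by
    apply Summable.tsum_lt_tsum bound1 (i := ⟨p₀, hp₀⟩) ?_ hsum_s hsummable
    calc ((p₀ : ℕ) : ℝ) ^ (-s) < ((p₀ : ℕ) : ℝ) ^ (-1 : ℝ) :=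
        Real.rpow_lt_rpow_of_exponent_lt (by linarith) (by linarith)
    _ = 1 / ((p₀ : ℕ) : ℝ) := by rw [Real.rpow_neg_one, one_div]
  have hylt : y < x := by
    have hb : ∀ p : P, ((p : ℕ) : ℝ) ^ (-(2 * s)) ≤ ((p : ℕ) : ℝ) ^ (-s) := fun p =>
      Real.rpow_le_rpow_of_exponent_le (by have := two_le_p hP p.2; linarith) (by linarith)
    have hi : ((p₀ : ℕ) : ℝ) ^ (-(2 * s)) < ((p₀ : ℕ) : ℝ) ^ (-s) :=
      Real.rpow_lt_rpow_of_exponent_lt (by linarith) (by linarith)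
    exact Summable.tsum_lt_tsum hb (i := ⟨p₀, hp₀⟩) hi hsum_2s hsum_s
  have hy2 : y ≤ A2 := by
    apply Summable.tsum_le_tsum (fun p => ?_) hsum_2s hsum_2
    have h1p : (1 : ℝ) ≤ ((p : ℕ) : ℝ) := by have := two_le_p hP p.2; linarith
    calc ((p : ℕ) : ℝ) ^ (-(2 * s)) ≤ ((p : ℕ) : ℝ) ^ (-2 : ℝ) :=
        Real.rpow_le_rpow_of_exponent_le h1p (by linarith)
    _ = 1 / ((p : ℕ) : ℝ) ^ 2 := by
        rw [show (-2 : ℝ) = -(2 : ℝ) from rfl, Real.rpow_neg (by linarith),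
          show ((2:ℝ)) = ((2:ℕ):ℝ) by norm_num, Real.rpow_natCast, one_div]
  have hy_nonneg : 0 ≤ y :=
    tsum_nonneg (fun p => Real.rpow_nonneg (Nat.cast_nonneg _) _)
  -- real core
  have core : x * x + y < 2 * x := by
    by_cases hx1 : x ≤ 1
    · nlinarith
    · push_neg at hx1
      have hA1gt : 1 < A1 := hx1.trans hxlt
      have hsqrt_pos : 0 < Real.sqrt (1 - A2) := by
        rcases lt_or_ge 0 (Real.sqrt (1 - A2)) with h | h
        · exact h
        · exfalso
          have : Real.sqrt (1 - A2) = 0 := le_antisymm h (Real.sqrt_nonneg _)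
          rw [this] at hineq
          linarith
      have h1A2 : 0 < 1 - A2 := Real.sqrt_pos.mp hsqrt_pos
      have hlt : x - 1 < Real.sqrt (1 - A2) := by linarith
      have hsq : (x - 1) * (x - 1) < 1 - A2 := by
        have h0 : 0 ≤ x - 1 := by linarith
        calc (x - 1) * (x - 1) < Real.sqrt (1 - A2) * Real.sqrt (1 - A2) :=
            mul_self_lt_mul_self h0 hlt
        _ = 1 - A2 := Real.mul_self_sqrt h1A2.le
      nlinarith
  -- transfer to ENNReal
  rw [SS_one_eq hP hsum_s, SS_one_eq hP hsum_2s, ← hx, ← hy]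
  rw [← ENNReal.ofReal_mul hx_pos.le, ← ENNReal.ofReal_add (by positivity) hy_nonneg]
  rw [show (2 : ℝ≥0∞) = ENNReal.ofReal 2 by norm_num, ← ENNReal.ofReal_mul (by norm_num)]
  exact (ENNReal.ofReal_lt_ofReal_iff (by linarith : (0:ℝ) < 2 * x)).mpr core

end analytic

lemma gg_le_one (P : Set ℕ) (k n : ℕ) : gg P k n ≤ 1 := by
  by_cases h : n ∈ NkSet P k
  · rw [gg_eq_one h]
  · rw [gg_eq_zero h]; norm_num

lemma w_integral {n : ℕ} (hn : 2 ≤ n) :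
    ∫⁻ s in Ioi (1 : ℝ), w s n = ENNReal.ofReal (1 / (n * Real.log n)) := by
  have hn0 : (0 : ℝ) < n := by positivity
  have hn1 : (1 : ℝ) < n := by exact_mod_cast hn
  set b : ℝ := Real.log n with hb
  have hbpos : 0 < b := Real.log_pos hn1
  have hrw : (fun s : ℝ => w s n) = fun s => ENNReal.ofReal (Real.exp (-b * s)) := by
    funext s
    rw [w, Real.rpow_def_of_pos hn0]
    ring_nf
    rw [hb]; ring_nf
  rw [hrw]
  have hint : IntegrableOn (fun s : ℝ => Real.exp (-b * s)) (Ioi 1) :=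
    exp_neg_integrableOn_Ioi 1 hbpos
  rw [← ofReal_integral_eq_lintegral_ofReal hint
    (ae_of_all _ fun s => (Real.exp_pos _).le)]
  congr 1
  have hderiv : ∀ x ∈ Ici (1 : ℝ),
      HasDerivAt (fun y : ℝ => -(Real.exp (-b * y) / b)) (Real.exp (-b * x)) x := by
    intro x _
    have h1 : HasDerivAt (fun y : ℝ => -b * y) (-b) x := by
      simpa using (hasDerivAt_id x).const_mul (-b)
    have h2 := (h1.exp.div_const b).neg
    have h3 : -(Real.exp (-b * x) * -b / b) = Real.exp (-b * x) := by
      field_simp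
    rw [h3] at h2
    exact h2
  have htend : Filter.Tendsto (fun y : ℝ => -(Real.exp (-b * y) / b)) Filter.atTop (nhds 0) := by
    have h0 : Filter.Tendsto (fun y : ℝ => -b * y) Filter.atTop Filter.atBot :=
      Filter.tendsto_id.const_mul_atTop_of_neg (by linarith)
    have h2 := ((Real.tendsto_exp_atBot.comp h0).div_const b).neg
    simpa using h2
  rw [MeasureTheory.integral_Ioi_of_hasDerivAt_of_tendsto'
    (fun x hx => hderiv x hx) hint htend]
  have hexp : Real.exp (-b) = 1 / n := by
    rw [Real.exp_neg, hb, Real.exp_log hn0, one_div]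
  have : -b * 1 = -b := by ring
  rw [this, hexp]
  field_simp
  ring

lemma meas_term (P : Set ℕ) (k n : ℕ) : Measurable fun s : ℝ => gg P k n * w s n := by
  rcases Nat.eq_zero_or_pos n with rfl | hn
  · have : (fun s : ℝ => gg P k 0 * w s 0) = fun _ => 0 := by
      funext s; rw [gg_zero, zero_mul]
    rw [this]; exact measurable_const
  · apply Measurable.const_mul
    have hn0 : (0 : ℝ) < n := by exact_mod_cast hn
    have : (fun s : ℝ => w s n) = fun s => ENNReal.ofReal (Real.exp (Real.log n * -s)) := by
      funext s; rw [w, Real.rpow_def_of_pos hn0]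
    rw [this]
    exact (ENNReal.continuous_ofReal.comp
      (Real.continuous_exp.comp (continuous_const.mul continuous_neg))).measurable

lemma SS_measurable (P : Set ℕ) (k : ℕ) : Measurable fun s : ℝ => SS P k s := by
  unfold SS
  exact Measurable.ennreal_tsum fun n => meas_term P k n

lemma lint_eq (P : Set ℕ) {k : ℕ} (hk : 1 ≤ k) :
    ∫⁻ s in Ioi (1 : ℝ), SS P k s =
      ∑' n : ℕ, gg P k n * ENNReal.ofReal (1 / (n * Real.log n)) := by
  unfold SS
  rw [lintegral_tsum fun n => (meas_term P k n).aemeasurable]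
  congr 1; funext n
  rw [lintegral_const_mul' _ _ ((gg_le_one P k n).trans_lt (by norm_num)).ne]
  by_cases hn : n ∈ NkSet P k
  · rw [w_integral (two_le_of_mem hk hn)]
  · rw [gg_eq_zero hn, zero_mul, zero_mul]

lemma lint_ne_top (P : Set ℕ) {k : ℕ} (hk : 1 ≤ k) (hSS : SS P k 1 ≠ ⊤) :
    ∫⁻ s in Ioi (1 : ℝ), SS P k s ≠ ⊤ := by
  rw [lint_eq P hk]
  have hbound : ∀ n : ℕ, gg P k n * ENNReal.ofReal (1 / (n * Real.log n)) ≤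
      ENNReal.ofReal (1 / Real.log 2) * (gg P k n * w 1 n) := by
    intro n
    by_cases hn : n ∈ NkSet P k
    · have h2n : 2 ≤ n := two_le_of_mem hk hn
      have hn0 : (0 : ℝ) < n := by positivity
      have hlog2 : (0 : ℝ) < Real.log 2 := Real.log_pos (by norm_num)
      have hlogn : Real.log 2 ≤ Real.log n :=
        Real.log_le_log (by norm_num) (by exact_mod_cast h2n)
      rw [gg_eq_one hn, one_mul, one_mul]
      have hw1 : w 1 n = ENNReal.ofReal (1 / n) := by
        rw [w, Real.rpow_neg_one, one_div]
      rw [hw1, ← ENNReal.ofReal_mul (by positivity)]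
      apply ENNReal.ofReal_le_ofReal
      rw [div_mul_div_comm, one_mul]
      exact one_div_le_one_div_of_le (by positivity) (by nlinarith)
    · simp [gg_eq_zero hn]
  have hle : (∑' n : ℕ, gg P k n * ENNReal.ofReal (1 / (n * Real.log n))) ≤
      ENNReal.ofReal (1 / Real.log 2) * SS P k 1 :=
    calc ∑' n : ℕ, gg P k n * ENNReal.ofReal (1 / (n * Real.log n))
        ≤ ∑' n : ℕ, ENNReal.ofReal (1 / Real.log 2) * (gg P k n * w 1 n) :=
          ENNReal.tsum_le_tsum hbound
    _ = ENNReal.ofReal (1 / Real.log 2) * SS P k 1 := by rw [ENNReal.tsum_mul_left]; rfl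
  exact ne_top_of_le_ne_top (ENNReal.mul_ne_top ENNReal.ofReal_ne_top hSS) hle

lemma tsum_goal_eq (P : Set ℕ) {k : ℕ} (hk : 1 ≤ k) :
    ∑' n : NkSet P k, 1 / ((n : ℝ) * Real.log n) =
      (∑' n : ℕ, gg P k n * ENNReal.ofReal (1 / (n * Real.log n))).toReal := by
  rw [ENNReal.tsum_toReal_eq fun n =>
    ENNReal.mul_ne_top ((gg_le_one P k n).trans_lt (by norm_num)).ne ENNReal.ofReal_ne_top]
  rw [tsum_subtype (NkSet P k) (fun n : ℕ => 1 / ((n : ℝ) * Real.log n))]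
  congr 1; funext n
  by_cases hn : n ∈ NkSet P k
  · have h2n : 2 ≤ n := two_le_of_mem hk hn
    have hpos : (0 : ℝ) ≤ 1 / (n * Real.log n) := by
      have : (0:ℝ) < Real.log n := Real.log_pos (by exact_mod_cast h2n)
      positivity
    rw [Set.indicator_of_mem hn, gg_eq_one hn, one_mul, ENNReal.toReal_ofReal hpos]
  · rw [Set.indicator_of_notMem hn, gg_eq_zero hn, zero_mul, ENNReal.toReal_zero]

lemma SS_zero_le_one (P : Set ℕ) (s : ℝ) : SS P 0 s ≤ 1 := by
  unfold SS
  rw [tsum_eq_single 1 ?_]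
  · calc gg P 0 1 * w s 1 ≤ 1 * w s 1 := mul_le_mul_left (gg_le_one P 0 1) _
    _ = w s 1 := one_mul _
    _ = 1 := by rw [w]; norm_num
  · intro n hn
    rcases Nat.eq_zero_or_pos n with rfl | hpos
    · rw [gg_zero, zero_mul]
    · have : n ∉ NkSet P 0 := by
        rintro ⟨⟨h0, -⟩, hlen⟩
        have := List.length_eq_zero_iff.mp hlen
        rcases (Nat.primeFactorsList_eq_nil n).mp this with h | h
        · omega
        · exact hn h
      rw [gg_eq_zero this, zero_mul]

lemma SS_mono_exp (P : Set ℕ) (j : ℕ) {s : ℝ} (hs : 1 ≤ s) : SS P j s ≤ SS P j 1 := by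
  apply ENNReal.tsum_le_tsum
  intro n
  rcases Nat.eq_zero_or_pos n with rfl | hpos
  · rw [gg_zero, zero_mul, zero_mul]
  · apply mul_le_mul_right
    apply ENNReal.ofReal_le_ofReal
    exact Real.rpow_le_rpow_of_exponent_le (by exact_mod_cast hpos) (by linarith)

lemma SS_ne_top {P : Set ℕ} (hP : ∀ p ∈ P, Nat.Prime p)
    (hsummable : Summable fun p : P => (1 : ℝ) / (p : ℝ)) (j : ℕ) {s : ℝ} (hs : 1 ≤ s) :
    SS P j s ≠ ⊤ := by
  refine ne_top_of_le_ne_top ?_ (SS_mono_exp P j hs)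
  induction j with
  | zero => exact ne_top_of_le_ne_top ENNReal.one_ne_top (SS_zero_le_one P 1)
  | succ j ih =>
      have h1 : SS P 1 1 ≠ ⊤ := by
        rw [SS_one_eq hP (summable_rpow hP hsummable le_rfl)]
        exact ENNReal.ofReal_ne_top
      exact ne_top_of_le_ne_top (ENNReal.mul_ne_top ih h1) (SS_le_mul j 1)

lemma main_lt {P : Set ℕ} (hP : ∀ p ∈ P, Nat.Prime p) (hne : P.Nonempty)
    (hsummable : Summable fun p : P => (1 : ℝ) / (p : ℝ))
    (hineq : ∑' p : P, (1 : ℝ) / (p : ℝ) ≤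
      1 + Real.sqrt (1 - ∑' p : P, (1 : ℝ) / ((p : ℝ) ^ 2)))
    {k : ℕ} (hk : 1 ≤ k) {s : ℝ} (hs : 1 < s) :
    SS P (k+1) s < SS P k s := by
  have h2 : SS P 2 s < SS P 1 s := by
    have hlt := (stepB hP s).trans_lt (stepC hP hne hsummable hineq hs)
    exact (ENNReal.mul_lt_mul_iff_right (by norm_num) (by norm_num)).mp hlt
  have hfin_k : SS P k s ≠ ⊤ := SS_ne_top hP hsummable k hs.le
  have hfin_1 : SS P 1 s ≠ ⊤ := SS_ne_top hP hsummable 1 hs.le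
  have hchain : SS P (k+1) s * SS P 1 s < SS P k s * SS P 1 s :=
    (stepA hk s).trans_lt
      ((ENNReal.mul_lt_mul_iff_right (SS_pos hP hne k s).ne' hfin_k).mpr h2)
  exact (ENNReal.mul_lt_mul_iff_left (SS_pos hP hne 1 s).ne' hfin_1).mp hchain

end BM

/-- The chain of strict inequalities (13) of Banks–Martin: if `P` is a nonempty set of
primes with `∑_{p∈P} p⁻¹ ≤ 1 + (1 - ∑_{p∈P} p⁻²)^{1/2}`, then for every `k ≥ 1`,
`∑_{n∈ℕ_k(P)} 1/(n log n) > ∑_{n∈ℕ_{k+1}(P)} 1/(n log n)`. -/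
theorem chain_of_strict_inequalities (P : Set ℕ) (hP : ∀ p ∈ P, Nat.Prime p)
    (hne : P.Nonempty)
    (hsummable : Summable fun p : P => (1 : ℝ) / (p : ℝ))
    (hineq : ∑' p : P, (1 : ℝ) / (p : ℝ) ≤
      1 + Real.sqrt (1 - ∑' p : P, (1 : ℝ) / ((p : ℝ) ^ 2)))
    (k : ℕ) (hk : 1 ≤ k) :
    ∑' n : NkSet P (k + 1), 1 / ((n : ℝ) * Real.log n) <
      ∑' n : NkSet P k, 1 / ((n : ℝ) * Real.log n) := by
  classical
  have hk1 : 1 ≤ k + 1 := by omega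
  have e1 : ∑' n : NkSet P (k + 1), 1 / ((n : ℝ) * Real.log n) =
      (∫⁻ s in Set.Ioi (1 : ℝ), BM.SS P (k + 1) s).toReal := by
    rw [BM.tsum_goal_eq P hk1, BM.lint_eq P hk1]
  have e2 : ∑' n : NkSet P k, 1 / ((n : ℝ) * Real.log n) =
      (∫⁻ s in Set.Ioi (1 : ℝ), BM.SS P k s).toReal := by
    rw [BM.tsum_goal_eq P hk, BM.lint_eq P hk]
  have hf1 : ∫⁻ s in Set.Ioi (1 : ℝ), BM.SS P (k + 1) s ≠ ⊤ :=
    BM.lint_ne_top P hk1 (BM.SS_ne_top hP hsummable (k + 1) le_rfl)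
  have hfk : ∫⁻ s in Set.Ioi (1 : ℝ), BM.SS P k s ≠ ⊤ :=
    BM.lint_ne_top P hk (BM.SS_ne_top hP hsummable k le_rfl)
  have hstrict : ∫⁻ s in Set.Ioi (1 : ℝ), BM.SS P (k + 1) s <
      ∫⁻ s in Set.Ioi (1 : ℝ), BM.SS P k s := by
    apply MeasureTheory.setLIntegral_strict_mono measurableSet_Ioi
      (by simp [Real.volume_Ioi]) (BM.SS_measurable P k) hf1
    exact MeasureTheory.ae_of_all _ fun s hs =>
      BM.main_lt hP hne hsummable hineq hk hs
  rw [e1, e2]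
  exact (ENNReal.toReal_lt_toReal hf1 hfk).mpr hstrict
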